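/- Let W = v_0, (v_0,v_1), ..., v_{n-1}, (v_{n-1},v_0), v_0 be a cycle of length n on a weighted directed graph, with vertex weights w(v_k) and edge weights w(v_k, v_{k+1}) (indices mod n) that are random variables. Suppose there are constants 0 < β ≤ B and A > 0, α < β, and a fixed scalar Δ > 0, such that for every k: 0 < w(v_k)Δ ≤ B with E[w(v_k)Δ | all other weights] = β, and w(v_k,v_{k+1}) ∈ [−A, A] with E[w(v_k,v_{k+1}) | all other weights] ≤ α. Then the probability that Γ(W) := −Σ_{k<n} w(v_k)Δ + Σ_{k<n} w(v_k,v_{k+1}) < 0 is at least 1 − exp(−(1/2)((α−β)/(A+B))² n). -/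

import Mathlib

open MeasureTheory
open MeasureTheory Real

lemma hoeffding_core {p h : ℝ} (hp0 : 0 ≤ p) (hp1 : p ≤ 1) (hh : 0 ≤ h) :
    1 - p + p * Real.exp h ≤ Real.exp (p * h + h ^ 2 / 8) := by
  set s : ℝ → ℝ := fun x => 1 - p + p * Real.exp x with hs_def
  have hs_pos : ∀ x, 0 < s x := by
    intro x
    rcases eq_or_lt_of_le hp0 with h0 | h0
    · simp [hs_def, ← h0]
    · have := Real.exp_pos x
      simp only [hs_def]
      nlinarith
  have hs_deriv : ∀ x, HasDerivAt s (p * Real.exp x) x := by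
    intro x
    exact ((Real.hasDerivAt_exp x).const_mul p).const_add (1 - p)
  set g : ℝ → ℝ := fun x => p + x / 4 - p * Real.exp x / s x with hg_def
  set f : ℝ → ℝ := fun x => p * x + x ^ 2 / 8 - Real.log (s x) with hf_def
  have hf_deriv : ∀ x, HasDerivAt f (g x) x := by
    intro x
    have hlog : HasDerivAt (fun y => Real.log (s y)) (p * Real.exp x / s x) x :=
      (hs_deriv x).log (ne_of_gt (hs_pos x))
    have h1 : HasDerivAt (fun y : ℝ => p * y + y ^ 2 / 8) (p + x / 4) x := by
      have := ((hasDerivAt_id x).const_mul p).add ((hasDerivAt_pow 2 x).div_const 8)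
      refine this.congr_deriv ?_
      simp
      ring
    exact h1.sub hlog
  have hg_deriv : ∀ x, HasDerivAt g
      (1 / 4 - (p * Real.exp x * s x - p * Real.exp x * (p * Real.exp x)) / (s x) ^ 2) x := by
    intro x
    have hq : HasDerivAt (fun y => p * Real.exp y / s y)
        ((p * Real.exp x * s x - p * Real.exp x * (p * Real.exp x)) / (s x) ^ 2) x :=
      ((Real.hasDerivAt_exp x).const_mul p).div (hs_deriv x) (ne_of_gt (hs_pos x))
    have h1 : HasDerivAt (fun y : ℝ => p + y / 4) (1 / 4) x := by
      simpa using ((hasDerivAt_id x).div_const 4).const_add p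
    exact h1.sub hq
  have hg_deriv_nonneg : ∀ x, 0 ≤ 1 / 4 -
      (p * Real.exp x * s x - p * Real.exp x * (p * Real.exp x)) / (s x) ^ 2 := by
    intro x
    rw [sub_nonneg, div_le_iff₀ (pow_pos (hs_pos x) 2)]
    have hsx : s x = 1 - p + p * Real.exp x := rfl
    nlinarith [sq_nonneg ((1 - p) - p * Real.exp x), Real.exp_pos x, hs_pos x]
  have hg_mono : Monotone g :=
    monotone_of_deriv_nonneg (fun x => (hg_deriv x).differentiableAt) (fun x => by
      rw [(hg_deriv x).deriv]; exact hg_deriv_nonneg x)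
  have hg0 : g 0 = 0 := by simp [hg_def, hs_def]
  have hf_cont : Continuous f :=
    continuous_iff_continuousAt.mpr fun x => (hf_deriv x).differentiableAt.continuousAt
  have hf_mono : MonotoneOn f (Set.Ici (0:ℝ)) := by
    apply monotoneOn_of_deriv_nonneg (convex_Ici 0) hf_cont.continuousOn
      (fun x _ => (hf_deriv x).differentiableAt.differentiableWithinAt)
    intro x hx
    rw [(hf_deriv x).deriv]
    rw [interior_Ici] at hx
    calc (0:ℝ) = g 0 := hg0.symm
      _ ≤ g x := hg_mono (le_of_lt hx)
  have hf0 : f 0 = 0 := by simp [hf_def, hs_def]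
  have hfh : 0 ≤ f h := by
    rw [← hf0]
    exact hf_mono (by simp) (by exact hh) hh
  have hlog : Real.log (s h) ≤ p * h + h ^ 2 / 8 := by
    simp only [hf_def] at hfh; linarith
  calc (1 : ℝ) - p + p * Real.exp h = s h := rfl
    _ = Real.exp (Real.log (s h)) := (Real.exp_log (hs_pos h)).symm
    _ ≤ Real.exp (p * h + h ^ 2 / 8) := Real.exp_le_exp.mpr hlog



lemma chord_exp {a b x L : ℝ} (hab : a < b) (hx1 : a ≤ x) (hx2 : x ≤ b) :
    Real.exp (L * x) ≤ ((b - x) * Real.exp (L * a) + (x - a) * Real.exp (L * b)) / (b - a) := by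
  have hba : (0:ℝ) < b - a := by linarith
  set u := (b - x) / (b - a) with hu
  set v := (x - a) / (b - a) with hv
  have hu0 : 0 ≤ u := div_nonneg (by linarith) hba.le
  have hv0 : 0 ≤ v := div_nonneg (by linarith) hba.le
  have huv : u + v = 1 := by rw [hu, hv]; field_simp; ring
  have hconv := convexOn_exp.2 (Set.mem_univ (L * a)) (Set.mem_univ (L * b)) hu0 hv0 huv
  have harg : u • (L * a) + v • (L * b) = L * x := by
    rw [smul_eq_mul, smul_eq_mul, hu, hv]
    field_simp
    ring
  rw [harg] at hconv
  calc Real.exp (L * x) ≤ u * Real.exp (L * a) + v * Real.exp (L * b) := by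
        simpa using hconv
    _ = ((b - x) * Real.exp (L * a) + (x - a) * Real.exp (L * b)) / (b - a) := by
        rw [hu, hv, div_mul_eq_mul_div, div_mul_eq_mul_div, ← add_div]

lemma hoeffding_scalar {a b m L : ℝ} (hab : a < b) (hm1 : a ≤ m) (hm2 : m ≤ b) (hL : 0 ≤ L) :
    ((b - m) * Real.exp (L * a) + (m - a) * Real.exp (L * b)) / (b - a) ≤
      Real.exp (L * m + L ^ 2 * (b - a) ^ 2 / 8) := by
  have hba : (0:ℝ) < b - a := by linarith
  set p := (m - a) / (b - a) with hp
  set h := L * (b - a) with hh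
  have hp0 : 0 ≤ p := div_nonneg (by linarith) hba.le
  have hp1 : p ≤ 1 := by rw [hp, div_le_one hba]; linarith
  have hh0 : 0 ≤ h := mul_nonneg hL hba.le
  have key := hoeffding_core hp0 hp1 hh0
  have hLHS : ((b - m) * Real.exp (L * a) + (m - a) * Real.exp (L * b)) / (b - a)
      = Real.exp (L * a) * (1 - p + p * Real.exp h) := by
    have hLb : L * b = L * a + h := by rw [hh]; ring
    rw [hLb, Real.exp_add, hp]
    field_simp
    ring
  have hRHS : Real.exp (L * m + L ^ 2 * (b - a) ^ 2 / 8)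
      = Real.exp (L * a) * Real.exp (p * h + h ^ 2 / 8) := by
    rw [← Real.exp_add]
    congr 1
    have : p * h = L * (m - a) := by
      rw [hp, hh]; field_simp
    rw [this, hh]
    ring
  rw [hLHS, hRHS]
  exact mul_le_mul_of_nonneg_left key (le_of_lt (Real.exp_pos _))
lemma azuma_step {Ω : Type*} {m0 : MeasurableSpace Ω} (μ : Measure Ω) [IsProbabilityMeasure μ]
    (F : MeasurableSpace Ω) (hF : F ≤ m0)
    (W X : Ω → ℝ) (hWmeas : StronglyMeasurable[F] W) (hWnn : ∀ ω, 0 ≤ W ω)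
    (C : ℝ) (hWb : ∀ᵐ ω ∂μ, W ω ≤ C)
    (hX : Measurable[m0] X) (a b γ L : ℝ) (hab : a < b) (hL : 0 ≤ L)
    (hXb : ∀ᵐ ω ∂μ, X ω ∈ Set.Icc a b)
    (hcond : ∀ᵐ ω ∂μ, (μ[X|F]) ω ≤ γ) :
    ∫ ω, W ω * Real.exp (L * X ω) ∂μ ≤
      Real.exp (L * γ + L ^ 2 * (b - a) ^ 2 / 8) * ∫ ω, W ω ∂μ := by
  set K := Real.exp (L * γ + L ^ 2 * (b - a) ^ 2 / 8) with hK
  have hba : (0:ℝ) < b - a := by linarith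
  have hWm0 : AEStronglyMeasurable[m0] W μ := (hWmeas.mono hF).aestronglyMeasurable
  have hWint : Integrable W μ := by
    refine Integrable.mono' (integrable_const C) hWm0 ?_
    filter_upwards [hWb] with ω h
    rw [Real.norm_of_nonneg (hWnn ω)]; exact h
  have hXint : Integrable X μ := by
    refine Integrable.mono' (integrable_const (max |a| |b|)) (hX.aestronglyMeasurable : AEStronglyMeasurable[m0] X μ) ?_
    filter_upwards [hXb] with ω h
    rw [Real.norm_eq_abs, abs_le]
    constructor
    · have := neg_abs_le a; have := le_max_left |a| |b|; linarith [h.1]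
    · have := le_abs_self b; have := le_max_right |a| |b|; linarith [h.2]
  set g : Ω → ℝ := fun ω => Real.exp (L * X ω) with hg
  have hg_meas : Measurable[m0] g := (Real.measurable_exp.comp (hX.const_mul L))
  have hg_int : Integrable g μ := by
    refine Integrable.mono' (integrable_const (Real.exp (L * b))) (hg_meas.aestronglyMeasurable : AEStronglyMeasurable[m0] g μ) ?_
    filter_upwards [hXb] with ω h
    rw [Real.norm_of_nonneg (Real.exp_pos _).le]
    exact Real.exp_le_exp.mpr (mul_le_mul_of_nonneg_left h.2 hL)
  have hWg_int : Integrable (fun ω => W ω * g ω) μ := by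
    refine Integrable.mono' (integrable_const (C * Real.exp (L * b)))
      (hWm0.mul (hg_meas.aestronglyMeasurable : AEStronglyMeasurable[m0] g μ)) ?_
    filter_upwards [hWb, hXb] with ω h1 h2
    rw [Real.norm_of_nonneg (mul_nonneg (hWnn ω) (Real.exp_pos _).le)]
    have hgle : g ω ≤ Real.exp (L * b) := Real.exp_le_exp.mpr (mul_le_mul_of_nonneg_left h2.2 hL)
    exact mul_le_mul h1 hgle (Real.exp_pos _).le ((hWnn ω).trans h1)
  -- the conditional expectation of g is bounded by K
  set c1 := (b * Real.exp (L * a) - a * Real.exp (L * b)) / (b - a) with hc1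
  set c2 := (Real.exp (L * b) - Real.exp (L * a)) / (b - a) with hc2
  have hφeq : ∀ x : ℝ, c1 + c2 * x = ((b - x) * Real.exp (L * a) + (x - a) * Real.exp (L * b)) / (b - a) := by
    intro x
    rw [hc1, hc2]
    field_simp
    ring
  set φ : Ω → ℝ := fun ω => c1 + c2 * X ω with hφ
  have hφ_int : Integrable φ μ := (integrable_const c1).add (hXint.const_mul c2)
  have hg_le_φ : g ≤ᵐ[μ] φ := by
    filter_upwards [hXb] with ω h
    rw [hφ]
    dsimp only
    rw [hφeq (X ω)]
    exact chord_exp hab h.1 h.2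
  have hM_ab : ∀ᵐ ω ∂μ, a ≤ (μ[X|F]) ω ∧ (μ[X|F]) ω ≤ b := by
    have h1 : μ[(fun _ => a : Ω → ℝ)|F] ≤ᵐ[μ] μ[X|F] :=
      condExp_mono (integrable_const a) hXint (hXb.mono fun ω h => h.1)
    have h2 : μ[X|F] ≤ᵐ[μ] μ[(fun _ => b : Ω → ℝ)|F] :=
      condExp_mono hXint (integrable_const b) (hXb.mono fun ω h => h.2)
    have ha := condExp_const (μ := μ) hF a
    have hb := condExp_const (μ := μ) hF b
    rw [ha] at h1; rw [hb] at h2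
    filter_upwards [h1, h2] with ω e1 e2
    exact ⟨e1, e2⟩
  have hcondφ : μ[φ|F] =ᵐ[μ] fun ω => c1 + c2 * (μ[X|F]) ω := by
    have h1 : μ[φ|F] =ᵐ[μ] μ[(fun _ => c1 : Ω → ℝ)|F] + μ[(fun ω => c2 * X ω)|F] :=
      condExp_add (integrable_const c1) (hXint.const_mul c2) F
    have h2 : μ[(fun ω => c2 * X ω)|F] =ᵐ[μ] c2 • μ[X|F] := condExp_smul c2 X F
    have h3 := condExp_const (μ := μ) hF c1
    filter_upwards [h1, h2] with ω e1 e2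
    rw [e1]
    simp only [Pi.add_apply, h3, Pi.smul_apply, smul_eq_mul] at *
    rw [e2]
  have hcondg_le : μ[g|F] ≤ᵐ[μ] μ[φ|F] := condExp_mono hg_int hφ_int hg_le_φ
  have hKbound : ∀ᵐ ω ∂μ, (μ[g|F]) ω ≤ K := by
    filter_upwards [hcondg_le, hcondφ, hM_ab, hcond] with ω e1 e2 e3 e4
    calc (μ[g|F]) ω ≤ c1 + c2 * (μ[X|F]) ω := by rw [← e2]; exact e1
      _ = ((b - (μ[X|F]) ω) * Real.exp (L * a) + ((μ[X|F]) ω - a) * Real.exp (L * b)) / (b - a) :=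
          hφeq _
      _ ≤ Real.exp (L * (μ[X|F]) ω + L ^ 2 * (b - a) ^ 2 / 8) :=
          hoeffding_scalar hab e3.1 e3.2 hL
      _ ≤ K := by
          rw [hK]
          exact Real.exp_le_exp.mpr (by nlinarith [mul_le_mul_of_nonneg_left e4 hL])
  -- put everything together
  have hpull : μ[(fun ω => W ω * g ω)|F] =ᵐ[μ] fun ω => W ω * (μ[g|F]) ω := by
    have := condExp_mul_of_stronglyMeasurable_left hWmeas hWg_int hg_int
    filter_upwards [this] with ω e
    exact e
  calc ∫ ω, W ω * g ω ∂μ = ∫ ω, (μ[(fun ω => W ω * g ω)|F]) ω ∂μ :=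
        (integral_condExp hF).symm
    _ = ∫ ω, W ω * (μ[g|F]) ω ∂μ := integral_congr_ae hpull
    _ ≤ ∫ ω, W ω * K ∂μ := by
        refine integral_mono_ae (integrable_condExp.congr hpull) (hWint.mul_const K) ?_
        filter_upwards [hKbound] with ω e
        exact mul_le_mul_of_nonneg_left e (hWnn ω)
    _ = K * ∫ ω, W ω ∂μ := by rw [integral_mul_const, mul_comm]
theorem stmt_3_aux {Ω : Type*} [mΩ : MeasurableSpace Ω] (μ : Measure Ω) [IsProbabilityMeasure μ]
    (n : ℕ) (hn : 0 < n) (wV wE : Fin n → Ω → ℝ)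
    (hVmeas : ∀ k, Measurable (wV k)) (hEmeas : ∀ k, Measurable (wE k))
    (Δ A B α β : ℝ) (hΔ : 0 < Δ) (hβ : 0 < β) (hβB : β ≤ B) (hA : 0 < A) (hαβ : α < β)
    (hVbdd : ∀ k, ∀ᵐ ω ∂μ, 0 < wV k ω * Δ ∧ wV k ω * Δ ≤ B)
    (hVcond : ∀ k,
      μ[fun ω => wV k ω * Δ |
        (⨆ (j : Fin n) (_ : j ≠ k), MeasurableSpace.comap (wV j) inferInstance) ⊔
        (⨆ j : Fin n, MeasurableSpace.comap (wE j) inferInstance)]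
        =ᵐ[μ] fun _ => β)
    (hEbdd : ∀ k, ∀ᵐ ω ∂μ, wE k ω ∈ Set.Icc (-A) A)
    (hEcond : ∀ k, ∀ᵐ ω ∂μ,
      (μ[wE k |
        (⨆ j : Fin n, MeasurableSpace.comap (wV j) inferInstance) ⊔
        (⨆ (j : Fin n) (_ : j ≠ k), MeasurableSpace.comap (wE j) inferInstance)]) ω ≤ α) :
    1 - Real.exp (-(1 / 2) * ((α - β) / (A + B)) ^ 2 * n) ≤
      (μ {ω | (∑ k, -(wV k ω * Δ)) + ∑ k, wE k ω < 0}).toReal := by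
  classical
  have hAB : (0:ℝ) < A + B := by linarith
  set L : ℝ := (β - α) / (A + B) ^ 2 with hLdef
  have hL : 0 ≤ L := le_of_lt (div_pos (by linarith) (by positivity))
  set K1 : ℝ := L * -β + L ^ 2 * ((0:ℝ) - -B) ^ 2 / 8 with hK1
  set K2 : ℝ := L * α + L ^ 2 * (A - -A) ^ 2 / 8 with hK2
  set Z : ℕ → Ω → ℝ :=
    fun k => if h : k < n then fun ω => -(wV ⟨k, h⟩ ω * Δ) + wE ⟨k, h⟩ ω else fun _ => 0 with hZ
  set S : ℕ → Ω → ℝ := fun m ω => ∑ k ∈ Finset.range m, Z k ω with hS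
  have hZmeas : ∀ k, Measurable (Z k) := by
    intro k
    by_cases h : k < n
    · simp only [hZ, dif_pos h]
      exact (((hVmeas ⟨k, h⟩).mul_const Δ).neg).add (hEmeas ⟨k, h⟩)
    · simp only [hZ, dif_neg h]; exact measurable_const
  have hSmeas : ∀ m, Measurable (S m) := by
    intro m
    exact Finset.measurable_sum _ (fun k _ => hZmeas k)
  have hbddAll : ∀ᵐ ω ∂μ, ∀ k : Fin n,
      (0 < wV k ω * Δ ∧ wV k ω * Δ ≤ B) ∧ wE k ω ∈ Set.Icc (-A) A := by
    rw [MeasureTheory.ae_all_iff]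
    exact fun k => (hVbdd k).and (hEbdd k)
  have hZbdd : ∀ᵐ ω ∂μ, ∀ k : ℕ, Z k ω ≤ A := by
    filter_upwards [hbddAll] with ω h
    intro k
    by_cases hk : k < n
    · simp only [hZ, dif_pos hk]
      have h1 := (h ⟨k, hk⟩).1.1
      have h2 := (h ⟨k, hk⟩).2.2
      linarith
    · simp only [hZ, dif_neg hk]; linarith
  have hSbdd : ∀ m : ℕ, ∀ᵐ ω ∂μ, S m ω ≤ m * A := by
    intro m
    filter_upwards [hZbdd] with ω h
    calc S m ω ≤ ∑ k ∈ Finset.range m, A := Finset.sum_le_sum (fun k _ => h k)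
      _ = m * A := by rw [Finset.sum_const, Finset.card_range, nsmul_eq_mul]
  -- the main induction
  have main : ∀ m, m ≤ n → ∫ ω, Real.exp (L * S m ω) ∂μ ≤ Real.exp (m * (K1 + K2)) := by
    intro m
    induction m with
    | zero =>
      intro _
      simp only [hS, Finset.range_zero, Finset.sum_empty, mul_zero, Real.exp_zero,
        Nat.cast_zero, zero_mul]
      simp [integral_const]
    | succ m ih =>
      intro hm1
      have hm : m < n := hm1
      have hmn : m ≤ n := le_of_lt hm
      set k : Fin n := ⟨m, hm⟩ with hk
      set FV : MeasurableSpace Ω :=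
        (⨆ (j : Fin n) (_ : (j:ℕ) < m), MeasurableSpace.comap (wV j) inferInstance) ⊔
        (⨆ (j : Fin n) (_ : (j:ℕ) < m), MeasurableSpace.comap (wE j) inferInstance) with hFV
      set FE : MeasurableSpace Ω :=
        (⨆ (j : Fin n) (_ : (j:ℕ) < m + 1), MeasurableSpace.comap (wV j) inferInstance) ⊔
        (⨆ (j : Fin n) (_ : (j:ℕ) < m), MeasurableSpace.comap (wE j) inferInstance) with hFE
      set GV : MeasurableSpace Ω :=
        (⨆ (j : Fin n) (_ : j ≠ k), MeasurableSpace.comap (wV j) inferInstance) ⊔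
        (⨆ j : Fin n, MeasurableSpace.comap (wE j) inferInstance) with hGV
      set GE : MeasurableSpace Ω :=
        (⨆ j : Fin n, MeasurableSpace.comap (wV j) inferInstance) ⊔
        (⨆ (j : Fin n) (_ : j ≠ k), MeasurableSpace.comap (wE j) inferInstance) with hGE
      have hGVle : GV ≤ mΩ := by
        apply sup_le
        · exact iSup₂_le fun j _ => (hVmeas j).comap_le
        · exact iSup_le fun j => (hEmeas j).comap_le
      have hGEle : GE ≤ mΩ := by
        apply sup_le
        · exact iSup_le fun j => (hVmeas j).comap_le
        · exact iSup₂_le fun j _ => (hEmeas j).comap_le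
      have hFVle : FV ≤ mΩ := by
        apply sup_le
        · exact iSup₂_le fun j _ => (hVmeas j).comap_le
        · exact iSup₂_le fun j _ => (hEmeas j).comap_le
      have hFEle : FE ≤ mΩ := by
        apply sup_le
        · exact iSup₂_le fun j _ => (hVmeas j).comap_le
        · exact iSup₂_le fun j _ => (hEmeas j).comap_le
      have hFVGV : FV ≤ GV := by
        apply sup_le
        · refine le_trans (iSup₂_le fun j hj => ?_) le_sup_left
          have hjk : j ≠ k := by
            intro he
            rw [he] at hj
            exact lt_irrefl m hj
          exact le_iSup₂ (f := fun (j : Fin n) (_ : j ≠ k) =>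
            MeasurableSpace.comap (wV j) inferInstance) j hjk
        · refine le_trans (iSup₂_le fun j _ => ?_) le_sup_right
          exact le_iSup (fun j : Fin n => MeasurableSpace.comap (wE j) inferInstance) j
      have hFEGE : FE ≤ GE := by
        apply sup_le
        · refine le_trans (iSup₂_le fun j _ => ?_) le_sup_left
          exact le_iSup (fun j : Fin n => MeasurableSpace.comap (wV j) inferInstance) j
        · refine le_trans (iSup₂_le fun j hj => ?_) le_sup_right
          have hjk : j ≠ k := by
            intro he
            rw [he] at hj
            exact lt_irrefl m hj
          exact le_iSup₂ (f := fun (j : Fin n) (_ : j ≠ k) =>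
            MeasurableSpace.comap (wE j) inferInstance) j hjk
      -- measurability of past variables w.r.t. FV and FE
      have hVmeasFE : ∀ (j : Fin n), (j:ℕ) < m + 1 → Measurable[FE] (wV j) := by
        intro j hj
        apply Measurable.of_comap_le
        refine le_trans ?_ le_sup_left
        exact le_iSup₂ (f := fun (j : Fin n) (_ : (j:ℕ) < m + 1) =>
          MeasurableSpace.comap (wV j) inferInstance) j hj
      have hEmeasFE : ∀ (j : Fin n), (j:ℕ) < m → Measurable[FE] (wE j) := by
        intro j hj
        apply Measurable.of_comap_le
        refine le_trans ?_ le_sup_right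
        exact le_iSup₂ (f := fun (j : Fin n) (_ : (j:ℕ) < m) =>
          MeasurableSpace.comap (wE j) inferInstance) j hj
      have hVmeasFV : ∀ (j : Fin n), (j:ℕ) < m → Measurable[FV] (wV j) := by
        intro j hj
        apply Measurable.of_comap_le
        refine le_trans ?_ le_sup_left
        exact le_iSup₂ (f := fun (j : Fin n) (_ : (j:ℕ) < m) =>
          MeasurableSpace.comap (wV j) inferInstance) j hj
      have hEmeasFV : ∀ (j : Fin n), (j:ℕ) < m → Measurable[FV] (wE j) := by
        intro j hj
        apply Measurable.of_comap_le
        refine le_trans ?_ le_sup_right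
        exact le_iSup₂ (f := fun (j : Fin n) (_ : (j:ℕ) < m) =>
          MeasurableSpace.comap (wE j) inferInstance) j hj
      have hZmeasFV : ∀ i, i < m → Measurable[FV] (Z i) := by
        intro i hi
        have hin : i < n := lt_trans hi hm
        simp only [hZ, dif_pos hin]
        exact (((hVmeasFV ⟨i, hin⟩ hi).mul_const Δ).neg).add (hEmeasFV ⟨i, hin⟩ hi)
      have hZmeasFE : ∀ i, i < m → Measurable[FE] (Z i) := by
        intro i hi
        have hin : i < n := lt_trans hi hm
        simp only [hZ, dif_pos hin]
        exact (((hVmeasFE ⟨i, hin⟩ (lt_trans hi (Nat.lt_succ_self m))).mul_const Δ).neg).add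
          (hEmeasFE ⟨i, hin⟩ hi)
      have hSmeasFV : Measurable[FV] (S m) := by
        apply Finset.measurable_sum
        intro i hi
        exact hZmeasFV i (Finset.mem_range.mp hi)
      have hSmeasFE : Measurable[FE] (S m) := by
        apply Finset.measurable_sum
        intro i hi
        exact hZmeasFE i (Finset.mem_range.mp hi)
      -- the two weight functions
      set W : Ω → ℝ := fun ω => Real.exp (L * S m ω) with hW
      set W' : Ω → ℝ := fun ω => Real.exp (L * (S m ω + -(wV k ω * Δ))) with hW'
      have hWb : ∀ᵐ ω ∂μ, W ω ≤ Real.exp (L * (m * A)) := by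
        filter_upwards [hSbdd m] with ω h
        exact Real.exp_le_exp.mpr (mul_le_mul_of_nonneg_left h hL)
      have hW'b : ∀ᵐ ω ∂μ, W' ω ≤ Real.exp (L * (m * A)) := by
        filter_upwards [hSbdd m, hVbdd k] with ω h h2
        apply Real.exp_le_exp.mpr
        apply mul_le_mul_of_nonneg_left _ hL
        have : -(wV k ω * Δ) ≤ 0 := by linarith [h2.1]
        linarith
      have hWmeas : StronglyMeasurable[FV] W :=
        (Real.measurable_exp.comp (hSmeasFV.const_mul L)).stronglyMeasurable
      have hW'meas : StronglyMeasurable[FE] W' := by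
        apply Measurable.stronglyMeasurable
        apply Real.measurable_exp.comp
        apply Measurable.const_mul
        exact hSmeasFE.add (((hVmeasFE k (Nat.lt_succ_self m)).mul_const Δ).neg)
      -- conditional mean bounds
      have hVk_int : Integrable (fun ω => wV k ω * Δ) μ := by
        refine Integrable.mono' (integrable_const B)
          (((hVmeas k).mul_const Δ).aestronglyMeasurable : AEStronglyMeasurable[mΩ] _ μ) ?_
        filter_upwards [hVbdd k] with ω h
        rw [Real.norm_of_nonneg h.1.le]
        exact h.2
      have hcondV : ∀ᵐ ω ∂μ, (μ[(fun ω => -(wV k ω * Δ))|FV]) ω ≤ -β := by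
        have h1 : μ[(fun ω => -(wV k ω * Δ))|FV] =ᵐ[μ] -μ[(fun ω => wV k ω * Δ)|FV] :=
          condExp_neg (fun ω => wV k ω * Δ) FV
        have h2 : μ[(fun ω => wV k ω * Δ)|FV]
            =ᵐ[μ] μ[μ[(fun ω => wV k ω * Δ)|GV]|FV] :=
          (condExp_condExp_of_le hFVGV hGVle).symm
        have h3 : μ[μ[(fun ω => wV k ω * Δ)|GV]|FV] =ᵐ[μ] μ[(fun _ => β : Ω → ℝ)|FV] :=
          condExp_congr_ae (hVcond k)
        have h4 := condExp_const (μ := μ) hFVle β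
        filter_upwards [h1, h2, h3] with ω e1 e2 e3
        rw [e1, Pi.neg_apply, e2, e3, h4]
      have hcondE : ∀ᵐ ω ∂μ, (μ[wE k|FE]) ω ≤ α := by
        have h2 : μ[wE k|FE] =ᵐ[μ] μ[μ[wE k|GE]|FE] :=
          (condExp_condExp_of_le hFEGE hGEle).symm
        have h3 : μ[μ[wE k|GE]|FE] ≤ᵐ[μ] μ[(fun _ => α : Ω → ℝ)|FE] :=
          condExp_mono integrable_condExp (integrable_const α) (hEcond k)
        have h4 := condExp_const (μ := μ) hFEle α
        filter_upwards [h2, h3] with ω e2 e3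
        rw [e2]
        calc (μ[μ[wE k|GE]|FE]) ω ≤ (μ[(fun _ => α : Ω → ℝ)|FE]) ω := e3
          _ = α := by rw [h4]
      -- apply the two Azuma steps
      have hstepE := azuma_step μ FE hFEle W' (wE k) hW'meas (fun ω => (Real.exp_pos _).le)
        (Real.exp (L * (m * A))) hW'b (hEmeas k) (-A) A α L (by linarith) hL (hEbdd k) hcondE
      have hVXb : ∀ᵐ ω ∂μ, (fun ω => -(wV k ω * Δ)) ω ∈ Set.Icc (-B) 0 := by
        filter_upwards [hVbdd k] with ω h
        exact ⟨by linarith [h.2], by linarith [h.1]⟩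
      have hstepV := azuma_step μ FV hFVle W (fun ω => -(wV k ω * Δ)) hWmeas
        (fun ω => (Real.exp_pos _).le) (Real.exp (L * (m * A))) hWb
        (((hVmeas k).mul_const Δ).neg) (-B) 0 (-β) L (by linarith) hL hVXb hcondV
      -- combine
      have hIW_nonneg : 0 ≤ ∫ ω, W ω ∂μ :=
        integral_nonneg (fun ω => (Real.exp_pos _).le)
      have hZm : Z m = fun ω => -(wV k ω * Δ) + wE k ω := by
        simp only [hZ, dif_pos hm]; rfl
      have hsum : ∀ ω, Real.exp (L * S (m + 1) ω) = W' ω * Real.exp (L * wE k ω) := by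
        intro ω
        have : S (m + 1) ω = S m ω + Z m ω := by
          simp only [hS, Finset.sum_range_succ]
        rw [this, hZm]
        simp only [hW']
        rw [← Real.exp_add]
        congr 1
        ring
      have hsum2 : ∀ ω, W' ω = W ω * Real.exp (L * -(wV k ω * Δ)) := by
        intro ω
        simp only [hW', hW]
        rw [← Real.exp_add]
        congr 1
        ring
      calc ∫ ω, Real.exp (L * S (m + 1) ω) ∂μ
          = ∫ ω, W' ω * Real.exp (L * wE k ω) ∂μ := by
            apply integral_congr_ae
            filter_upwards with ω
            exact hsum ω
        _ ≤ Real.exp (L * α + L ^ 2 * (A - -A) ^ 2 / 8) * ∫ ω, W' ω ∂μ := hstepE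
        _ = Real.exp K2 * ∫ ω, W ω * Real.exp (L * -(wV k ω * Δ)) ∂μ := by
            rw [hK2]
            congr 1
            apply integral_congr_ae
            filter_upwards with ω
            exact hsum2 ω
        _ ≤ Real.exp K2 * (Real.exp (L * -β + L ^ 2 * ((0:ℝ) - -B) ^ 2 / 8) * ∫ ω, W ω ∂μ) := by
            apply mul_le_mul_of_nonneg_left _ (Real.exp_pos _).le
            convert hstepV using 3
        _ = Real.exp K2 * (Real.exp K1 * ∫ ω, W ω ∂μ) := by rw [hK1]
        _ ≤ Real.exp K2 * (Real.exp K1 * Real.exp (m * (K1 + K2))) := by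
            apply mul_le_mul_of_nonneg_left _ (Real.exp_pos _).le
            exact mul_le_mul_of_nonneg_left (ih hmn) (Real.exp_pos _).le
        _ = Real.exp ((m + 1 : ℕ) * (K1 + K2)) := by
            rw [← Real.exp_add, ← Real.exp_add]
            congr 1
            push_cast
            ring
  -- Chernoff bound
  have hTint : Integrable (fun ω => Real.exp (L * S n ω)) μ := by
    refine Integrable.mono' (integrable_const (Real.exp (L * (n * A))))
      ((Real.measurable_exp.comp ((hSmeas n).const_mul L)).aestronglyMeasurable :
        AEStronglyMeasurable _ μ) ?_
    filter_upwards [hSbdd n] with ω h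
    rw [Real.norm_of_nonneg (Real.exp_pos _).le]
    exact Real.exp_le_exp.mpr (mul_le_mul_of_nonneg_left h hL)
  have hch : (μ {ω | 0 ≤ S n ω}).toReal ≤ ∫ ω, Real.exp (L * S n ω) ∂μ := by
    have := ProbabilityTheory.measure_ge_le_exp_mul_mgf (X := S n) (μ := μ) 0 hL hTint
    simpa [ProbabilityTheory.mgf, measureReal_def] using this
  have hcrunch : K1 + K2 ≤ -(1 / 2) * ((α - β) / (A + B)) ^ 2 := by
    have hne : A + B ≠ 0 := ne_of_gt hAB
    have key : (((0:ℝ) - -B) ^ 2 / 8 + (A - -A) ^ 2 / 8) ≤ (A + B) ^ 2 / 2 := by nlinarith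
    calc K1 + K2
        = (β - α) / (A + B) ^ 2 * (α - β) +
          ((β - α) / (A + B) ^ 2) ^ 2 * (((0:ℝ) - -B) ^ 2 / 8 + (A - -A) ^ 2 / 8) := by
          rw [hK1, hK2, hLdef]; ring
      _ ≤ (β - α) / (A + B) ^ 2 * (α - β) +
          ((β - α) / (A + B) ^ 2) ^ 2 * ((A + B) ^ 2 / 2) := by
          have := mul_le_mul_of_nonneg_left key (sq_nonneg ((β - α) / (A + B) ^ 2))
          linarith
      _ = -(1 / 2) * ((α - β) / (A + B)) ^ 2 := by
          field_simp
          ring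
  have hfinal : (μ {ω | 0 ≤ S n ω}).toReal ≤
      Real.exp (-(1 / 2) * ((α - β) / (A + B)) ^ 2 * n) := by
    refine le_trans hch (le_trans (main n le_rfl) (Real.exp_le_exp.mpr ?_))
    calc (n : ℝ) * (K1 + K2) ≤ (n : ℝ) * (-(1 / 2) * ((α - β) / (A + B)) ^ 2) :=
          mul_le_mul_of_nonneg_left hcrunch (Nat.cast_nonneg n)
      _ = -(1 / 2) * ((α - β) / (A + B)) ^ 2 * n := by ring
  -- rewrite the target set
  have hSn : ∀ ω, S n ω = (∑ k, -(wV k ω * Δ)) + ∑ k, wE k ω := by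
    intro ω
    have h1 : S n ω = ∑ i : Fin n, Z (i : ℕ) ω := by
      rw [hS]
      exact (Fin.sum_univ_eq_sum_range (fun i => Z i ω) n).symm
    rw [h1]
    have h2 : ∀ i : Fin n, Z (i : ℕ) ω = -(wV i ω * Δ) + wE i ω := by
      intro i
      simp only [hZ, dif_pos i.isLt, Fin.eta]
    rw [Finset.sum_congr rfl (fun i _ => h2 i), Finset.sum_add_distrib]
  have hset : {ω | (∑ k, -(wV k ω * Δ)) + ∑ k, wE k ω < 0} = {ω | 0 ≤ S n ω}ᶜ := by
    ext ω
    simp only [Set.mem_setOf_eq, Set.mem_compl_iff, not_le, hSn ω]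
  have hsmeas : MeasurableSet {ω | 0 ≤ S n ω} :=
    measurableSet_le measurable_const (hSmeas n)
  rw [hset, prob_compl_eq_one_sub hsmeas,
    ENNReal.toReal_sub_of_le prob_le_one ENNReal.one_ne_top, ENNReal.toReal_one]
  linarith [hfinal]

/-- For a cycle of length `n` with random vertex weights `wV k` and edge
weights `wE k` such that `0 < wV k * Δ ≤ B` with conditional mean (given all other
weights) equal to `β`, and `wE k ∈ [−A, A]` with conditional mean at most `α < β`,
the probability that `Γ(W) = −Σ wV k * Δ + Σ wE k < 0` is at least
`1 − exp(−(1/2)((α−β)/(A+B))² n)`. -/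
theorem stmt_3 {Ω : Type*} [MeasurableSpace Ω] (μ : Measure Ω) [IsProbabilityMeasure μ]
    (n : ℕ) (hn : 0 < n) (wV wE : Fin n → Ω → ℝ)
    (hVmeas : ∀ k, Measurable (wV k)) (hEmeas : ∀ k, Measurable (wE k))
    (Δ A B α β : ℝ) (hΔ : 0 < Δ) (hβ : 0 < β) (hβB : β ≤ B) (hA : 0 < A) (hαβ : α < β)
    (hVbdd : ∀ k, ∀ᵐ ω ∂μ, 0 < wV k ω * Δ ∧ wV k ω * Δ ≤ B)
    (hVcond : ∀ k,
      μ[fun ω => wV k ω * Δ |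
        (⨆ (j : Fin n) (_ : j ≠ k), MeasurableSpace.comap (wV j) inferInstance) ⊔
        (⨆ j : Fin n, MeasurableSpace.comap (wE j) inferInstance)]
        =ᵐ[μ] fun _ => β)
    (hEbdd : ∀ k, ∀ᵐ ω ∂μ, wE k ω ∈ Set.Icc (-A) A)
    (hEcond : ∀ k, ∀ᵐ ω ∂μ,
      (μ[wE k |
        (⨆ j : Fin n, MeasurableSpace.comap (wV j) inferInstance) ⊔
        (⨆ (j : Fin n) (_ : j ≠ k), MeasurableSpace.comap (wE j) inferInstance)]) ω ≤ α) :
    1 - Real.exp (-(1 / 2) * ((α - β) / (A + B)) ^ 2 * n) ≤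
      (μ {ω | (∑ k, -(wV k ω * Δ)) + ∑ k, wE k ω < 0}).toReal :=
  stmt_3_aux μ n hn wV wE hVmeas hEmeas Δ A B α β hΔ hβ hβB hA hαβ hVbdd hVcond hEbdd hEcond
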